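/- Let n ≥ r ≥ 2 and 0 < α, η < 1 with rη ≤ 1 − α. Let H = (n, ⟨(X_i,Σ_i,μ_i)⟩, 𝓗) be an η-nonatomic hypergraph system, e ∈ 𝓗 with |e| = r, and S_{∂e} the family of sets of the form ∩_{e' ∈ ∂e} A_{e'} with A_{e'} measurable with respect to the coordinates in e'. Then for every A ∈ S_{∂e} with μ(A) < α there exists B ∈ S_{∂e} with A ⊆ B and α ≤ μ(B) < α + 2η. -/

import Mathlib

open MeasureTheory
open scoped ENNReal

/-- `A ⊆ ∏ i, X i` depends only on the coordinates in `e`. -/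
def CoordDependsOn {n : ℕ} {X : Fin n → Type*} (e : Finset (Fin n)) (A : Set (∀ i, X i)) : Prop :=
  ∀ x y : ∀ i, X i, (∀ i ∈ e, x i = y i) → (x ∈ A ↔ y ∈ A)

/-- `A` belongs to `B_e`: it is measurable and depends only on the coordinates in `e`. -/
def CubeSet {n : ℕ} {X : Fin n → Type*} [∀ i, MeasurableSpace (X i)]
    (e : Finset (Fin n)) (A : Set (∀ i, X i)) : Prop :=
  MeasurableSet A ∧ CoordDependsOn e A

/-- The boundary `∂e` of `e`: subsets of `e` of size `|e| - 1`. -/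
def bdry {n : ℕ} (e : Finset (Fin n)) : Finset (Finset (Fin n)) :=
  e.powerset.filter (fun e' => e'.card + 1 = e.card)

/-- `A ∈ S_{∂e}`: `A` is an intersection `⋂_{e' ∈ ∂e} A_{e'}` with `A_{e'} ∈ B_{e'}`. -/
def SPartial {n : ℕ} {X : Fin n → Type*} [∀ i, MeasurableSpace (X i)]
    (e : Finset (Fin n)) (A : Set (∀ i, X i)) : Prop :=
  ∃ F : Finset (Fin n) → Set (∀ i, X i),
    (∀ e' ∈ bdry e, CubeSet e' (F e')) ∧ A = ⋂ e' ∈ bdry e, F e'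

/-- Every atom of `ν` has measure at most `η`. -/
def AtomsLE {Y : Type*} [MeasurableSpace Y] (ν : Measure Y) (η : ℝ) : Prop :=
  ∀ A : Set Y, MeasurableSet A → 0 < ν A →
    (∀ B : Set Y, B ⊆ A → MeasurableSet B → ν B = 0 ∨ ν B = ν A) →
    (ν A).toReal ≤ η

/-- Atom bound transfers along `ν ≤ μ`. -/
lemma atomsLE_of_le {Y : Type*} [MeasurableSpace Y] {μ ν : Measure Y}
    [IsFiniteMeasure μ] (hle : ν ≤ μ) {η : ℝ} (hμ : AtomsLE μ η) :
    AtomsLE ν η := by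
  have hνfin : ∀ s : Set Y, ν s ≠ ⊤ := fun s =>
    ((hle s).trans_lt (measure_lt_top μ s)).ne
  intro S hS hS0 hatom
  set c := ν S with hc
  set m := ⨅ (T : {T : Set Y // T ⊆ S ∧ MeasurableSet T ∧ ν T = c}), μ T.1 with hm
  have hmtop : m ≠ ⊤ := by
    refine ne_top_of_le_ne_top (measure_ne_top μ S) ?_
    exact iInf_le_of_le ⟨S, subset_rfl, hS, rfl⟩ (le_refl _)
  -- choose a minimizing sequence
  have hseq : ∀ k : ℕ, ∃ T : Set Y, T ⊆ S ∧ MeasurableSet T ∧ ν T = c ∧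
      μ T < m + ((k : ℝ≥0∞) + 1)⁻¹ := by
    intro k
    have h1 : m < m + ((k : ℝ≥0∞) + 1)⁻¹ := by
      refine ENNReal.lt_add_right hmtop ?_
      simp
    rw [hm, iInf_lt_iff] at h1
    obtain ⟨⟨T, hT1, hT2, hT3⟩, hT4⟩ := h1
    exact ⟨T, hT1, hT2, hT3, hT4⟩
  choose Tf hTf1 hTf2 hTf3 hTf4 using hseq
  set T : Set Y := ⋂ k, Tf k with hTdef
  have hTsub : T ⊆ S := (Set.iInter_subset _ 0).trans (hTf1 0)
  have hTmeas : MeasurableSet T := MeasurableSet.iInter fun k => hTf2 k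
  have hTfull : ν T = c := by
    have hnull : ν (S \ T) = 0 := by
      have : S \ T = ⋃ k, (S \ Tf k) := by
        rw [hTdef]; rw [Set.diff_iInter]
      rw [this]
      refine measure_iUnion_null fun k => ?_
      have := measure_diff (hTf1 k) (hTf2 k).nullMeasurableSet (hνfin _)
      rw [this, hTf3 k, ← hc, tsub_self]
    have h1 : ν S ≤ ν T := by
      calc ν S ≤ ν (T ∪ (S \ T)) := measure_mono (fun x hx => by
            by_cases h : x ∈ T
            · exact Or.inl h
            · exact Or.inr ⟨hx, h⟩)
        _ ≤ ν T + ν (S \ T) := measure_union_le _ _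
        _ = ν T := by rw [hnull, add_zero]
    rw [hc]
    exact le_antisymm (measure_mono hTsub) h1
  have hmle : ∀ B : Set Y, B ⊆ S → MeasurableSet B → ν B = c → m ≤ μ B :=
    fun B h1 h2 h3 =>
      hm.le.trans (iInf_le (fun T : {T : Set Y // T ⊆ S ∧ MeasurableSet T ∧ ν T = c} => μ T.1)
        ⟨B, h1, h2, h3⟩)
  have hTm : μ T = m := by
    refine le_antisymm ?_ (hmle T hTsub hTmeas hTfull)
    refine ENNReal.le_of_forall_pos_le_add fun ε hε hmt => ?_
    obtain ⟨k, hk⟩ := ENNReal.exists_inv_nat_lt (a := (ε : ℝ≥0∞)) (ENNReal.coe_ne_zero.2 hε.ne')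
    calc μ T ≤ μ (Tf k) := measure_mono (Set.iInter_subset _ k)
      _ ≤ m + ((k : ℝ≥0∞) + 1)⁻¹ := (hTf4 k).le
      _ ≤ m + (k : ℝ≥0∞)⁻¹ := by
          gcongr
          exact le_self_add
      _ ≤ m + ε := add_le_add_right hk.le m
  -- T is a μ-atom of measure > η unless c.toReal ≤ η
  have hT0 : 0 < μ T := lt_of_lt_of_le (lt_of_lt_of_le hS0 (hTfull.symm.le)) (hle T)
  have hTatom : ∀ B : Set Y, B ⊆ T → MeasurableSet B → μ B = 0 ∨ μ B = μ T := by
    intro B hBT hBmeas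
    by_contra hcon
    push_neg at hcon
    obtain ⟨hB0, hBT'⟩ := hcon
    have hBlt : μ B < μ T := lt_of_le_of_ne (measure_mono hBT) hBT'
    rcases hatom B (hBT.trans hTsub) hBmeas with hνB | hνB
    · -- then T \ B is in the family with smaller μ
      have h1 : ν (T \ B) = c := by
        have := measure_diff hBT hBmeas.nullMeasurableSet (hνfin B)
        rw [this, hνB, hTfull, tsub_zero]
      have h2 : μ (T \ B) < m := by
        have := measure_diff hBT hBmeas.nullMeasurableSet (measure_ne_top μ B)
        rw [this, hTm]
        exact ENNReal.sub_lt_self hmtop (hT0.trans_le hTm.le).ne'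
          (pos_iff_ne_zero.1 (pos_iff_ne_zero.2 hB0))
      exact absurd (hmle (T \ B) ((Set.diff_subset).trans hTsub) (hTmeas.diff hBmeas) h1) h2.not_ge
    · -- B is in the family with smaller μ
      exact absurd (hmle B (hBT.trans hTsub) hBmeas hνB) (hBlt.trans_le hTm.le).not_ge
  have := hμ T hTmeas hT0 hTatom
  calc c.toReal ≤ (μ T).toReal := by
        refine ENNReal.toReal_mono (measure_ne_top μ T) ?_
        rw [← hTfull]; exact hle T
    _ ≤ η := this

/-- In a region all of whose positive-measure subsets have measure ≥ δ, there is an atom. -/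
lemma exists_atom_aux {Y : Type*} [MeasurableSpace Y] (ν : Measure Y) [IsFiniteMeasure ν]
    (δ : ℝ≥0∞) :
    ∀ (K : ℕ) (W : Set Y), MeasurableSet W → ν W ≤ K * δ → 0 < ν W →
    (∀ U : Set Y, U ⊆ W → MeasurableSet U → ν U = 0 ∨ δ ≤ ν U) →
    ∃ U : Set Y, U ⊆ W ∧ MeasurableSet U ∧ 0 < ν U ∧
      (∀ V : Set Y, V ⊆ U → MeasurableSet V → ν V = 0 ∨ ν V = ν U) := by
  intro K
  induction K with
  | zero =>
    intro W _ hK h0 _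
    simp only [Nat.cast_zero, zero_mul, nonpos_iff_eq_zero] at hK
    exact absurd hK h0.ne'
  | succ K ih =>
    intro W hW hK h0 hd
    by_cases hatom : ∀ V : Set Y, V ⊆ W → MeasurableSet V → ν V = 0 ∨ ν V = ν W
    · exact ⟨W, subset_rfl, hW, h0, hatom⟩
    · push_neg at hatom
      obtain ⟨V, hVW, hVmeas, hV0, hVW'⟩ := hatom
      have hVpos : 0 < ν V := pos_iff_ne_zero.2 hV0
      have hδV : δ ≤ ν V := (hd V hVW hVmeas).resolve_left hV0
      have hδtop : δ ≠ ⊤ := (hδV.trans_lt (measure_lt_top ν V)).ne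
      have hdiff : ν (W \ V) = ν W - ν V :=
        measure_diff hVW hVmeas.nullMeasurableSet (measure_ne_top ν V)
      have hdiff0 : ν (W \ V) ≠ 0 := by
        intro h
        have : ν W ≤ ν V := by
          have h2 : ν W ≤ ν V + ν (W \ V) :=
            (measure_mono (by rw [Set.union_diff_cancel hVW])).trans (measure_union_le _ _)
          rwa [h, add_zero] at h2
        exact hVW' (le_antisymm (measure_mono hVW) this)
      have hδdiff : δ ≤ ν (W \ V) :=
        (hd _ Set.diff_subset (hW.diff hVmeas)).resolve_left hdiff0
      have hVK : ν V ≤ K * δ := by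
        have h1 : ν V + δ ≤ ν W := by
          calc ν V + δ ≤ ν V + ν (W \ V) := add_le_add_right hδdiff _
            _ = ν W := by
                rw [← measure_union (Set.disjoint_sdiff_right) (hW.diff hVmeas),
                  Set.union_diff_cancel hVW]
        have h2 : ν V + δ ≤ K * δ + δ := by
          refine h1.trans (hK.trans ?_)
          rw [Nat.cast_succ, add_mul, one_mul]
        exact (ENNReal.add_le_add_iff_right hδtop).1 h2
      obtain ⟨U, hU1, hU2, hU3, hU4⟩ :=
        ih V hVmeas hVK hVpos (fun U hU hUm => hd U (hU.trans hVW) hUm)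
      exact ⟨U, hU1.trans hVW, hU2, hU3, hU4⟩

/-- Key lemma: for a finite measure all of whose atoms have measure ≤ η, every target
value `t ≤ ν(univ)` can be approximated from above within `η` by the measure of a set. -/
lemma exists_measure_between {Y : Type*} [MeasurableSpace Y] (ν : Measure Y)
    [IsFiniteMeasure ν] {η : ℝ} (hη : 0 < η) (hA : AtomsLE ν η) {t : ℝ} (ht0 : 0 ≤ t)
    (ht : ENNReal.ofReal t ≤ ν Set.univ) :
    ∃ S : Set Y, MeasurableSet S ∧ t ≤ (ν S).toReal ∧ (ν S).toReal ≤ t + η := by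
  classical
  set t' : ℝ≥0∞ := ENNReal.ofReal t with ht'
  have ht'top : t' ≠ ⊤ := ENNReal.ofReal_ne_top
  set d : Set Y → ℝ≥0∞ :=
    fun S => ⨆ (U : Set Y) (_ : MeasurableSet U ∧ ν (S ∪ U) ≤ t'), ν (U \ S) with hd
  have hdtop : ∀ S, d S ≠ ⊤ := by
    intro S
    refine ne_top_of_le_ne_top (measure_ne_top ν Set.univ) ?_
    exact iSup₂_le fun U _ => measure_mono (Set.subset_univ _)
  have step : ∀ S : Set Y, MeasurableSet S → ν S ≤ t' →
      ∃ U : Set Y, MeasurableSet U ∧ ν (S ∪ U) ≤ t' ∧ d S ≤ 2 * ν (U \ S) := by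
    intro S hSm hSt
    by_cases h0 : d S = 0
    · exact ⟨∅, MeasurableSet.empty, by simpa using hSt, by simp [h0]⟩
    · have hhalf : d S / 2 < d S := ENNReal.half_lt_self h0 (hdtop S)
      rw [hd] at hhalf
      simp only [lt_iSup_iff] at hhalf
      obtain ⟨U, ⟨hU1, hU2⟩, hU3⟩ := hhalf
      refine ⟨U, hU1, hU2, ?_⟩
      have : d S = d S / 2 * 2 := by
        rw [ENNReal.div_mul_cancel (by norm_num) (by norm_num)]
      rw [this, mul_comm]
      exact mul_le_mul_right hU3.le 2
  choose! U hU1 hU2 hU3 using step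
  set g : ℕ → Set Y := fun k => Nat.rec ∅ (fun _ Sk => Sk ∪ U Sk) k with hg
  have hgsucc : ∀ k, g (k + 1) = g k ∪ U (g k) := fun k => rfl
  have hginv : ∀ k, MeasurableSet (g k) ∧ ν (g k) ≤ t' := by
    intro k
    induction k with
    | zero => exact ⟨MeasurableSet.empty, by rw [show g 0 = ∅ from rfl, measure_empty]; exact zero_le⟩
    | succ k ih =>
      refine ⟨(ih.1.union (hU1 _ ih.1 ih.2)), ?_⟩
      rw [hgsucc]
      exact hU2 _ ih.1 ih.2
  have hgmono : Monotone g :=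
    monotone_nat_of_le_succ fun k => by rw [hgsucc]; exact Set.subset_union_left
  set Sw : Set Y := ⋃ k, g k with hSw
  have hSwmeas : MeasurableSet Sw := MeasurableSet.iUnion fun k => (hginv k).1
  have hSwval : ν Sw = ⨆ k, ν (g k) :=
    Directed.measure_iUnion (hgmono.directed_le)
  have hSwt : ν Sw ≤ t' := by
    rw [hSwval]; exact iSup_le fun k => (hginv k).2
  -- the union of increments
  have hsucc_val : ∀ k, ν (g (k + 1)) = ν (g k) + ν (U (g k) \ g k) := by
    intro k
    rw [hgsucc, ← measure_union (Set.disjoint_sdiff_right)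
      (((hU1 _ (hginv k).1 (hginv k).2)).diff (hginv k).1), Set.union_diff_self]
  have hsum : ∀ m : ℕ, ∑ k ∈ Finset.range m, ν (U (g k) \ g k) = ν (g m) := by
    intro m
    induction m with
    | zero =>
      rw [Finset.range_zero, Finset.sum_empty, show g 0 = ∅ from rfl, measure_empty]
    | succ m ih => rw [Finset.sum_range_succ, ih, ← hsucc_val]
  -- key claim: nothing of positive measure fits in the remaining budget outside Sw
  have key : ∀ V : Set Y, MeasurableSet V → V ⊆ Swᶜ → ν Sw + ν V ≤ t' → ν V = 0 := by
    intro V hVm hVsub hVt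
    by_contra hV0
    have hbound : ∀ k, ν V ≤ 2 * ν (U (g k) \ g k) := by
      intro k
      have h1 : ν (g k ∪ V) ≤ t' := by
        calc ν (g k ∪ V) ≤ ν (g k) + ν V := measure_union_le _ _
          _ ≤ ν Sw + ν V := by
              exact add_le_add_left (measure_mono (μ := ν) (Set.subset_iUnion g k)) _
          _ ≤ t' := hVt
      have h2 : ν (V \ g k) = ν V := by
        congr 1
        ext x
        simp only [Set.mem_diff]
        refine ⟨fun h => h.1, fun h => ⟨h, fun hx => ?_⟩⟩
        exact (hVsub h) (Set.subset_iUnion g k hx)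
      calc ν V = ν (V \ g k) := h2.symm
        _ ≤ d (g k) := by
            rw [hd]
            exact le_iSup₂_of_le V ⟨hVm, h1⟩ (le_refl _)
        _ ≤ 2 * ν (U (g k) \ g k) := hU3 _ (hginv k).1 (hginv k).2
    -- summing gives m * ν V ≤ 2 t' for all m, contradiction
    obtain ⟨m, hm⟩ := ENNReal.exists_nat_mul_gt hV0 (by
      exact ENNReal.mul_ne_top (by norm_num) ht'top : 2 * t' ≠ ⊤)
    have : (m : ℝ≥0∞) * ν V ≤ 2 * t' := by
      calc (m : ℝ≥0∞) * ν V = ∑ _k ∈ Finset.range m, ν V := by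
            simp [Finset.sum_const, nsmul_eq_mul]
        _ ≤ ∑ k ∈ Finset.range m, 2 * ν (U (g k) \ g k) :=
            Finset.sum_le_sum fun k _ => hbound k
        _ = 2 * ν (g m) := by rw [← Finset.mul_sum, hsum]
        _ ≤ 2 * t' := mul_le_mul_right (hginv m).2 2
    exact absurd this hm.not_ge
  by_cases hcase : t' ≤ ν Sw
  · refine ⟨Sw, hSwmeas, ?_, ?_⟩
    · rw [le_antisymm hSwt hcase, ht', ENNReal.toReal_ofReal ht0]
    · rw [le_antisymm hSwt hcase, ht', ENNReal.toReal_ofReal ht0]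
      linarith
  · push_neg at hcase
    set δ : ℝ≥0∞ := t' - ν Sw with hδ
    have hδ0 : 0 < δ := tsub_pos_of_lt hcase
    have hδtop : δ ≠ ⊤ := ne_top_of_le_ne_top ht'top tsub_le_self
    have hδadd : ν Sw + δ = t' := add_tsub_cancel_of_le hcase.le
    set W : Set Y := Swᶜ with hW
    have hWmeas : MeasurableSet W := hSwmeas.compl
    have hWpos : 0 < ν W := by
      have h1 : ν Set.univ ≤ ν Sw + ν W :=
        (measure_mono (by rw [hW, Set.union_compl_self])).trans (measure_union_le _ _)
      by_contra h
      push_neg at h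
      simp only [nonpos_iff_eq_zero] at h
      rw [h, add_zero] at h1
      exact absurd (ht.trans h1) hcase.not_ge
    have hdW : ∀ V : Set Y, V ⊆ W → MeasurableSet V → ν V = 0 ∨ δ ≤ ν V := by
      intro V hVW hVm
      by_cases h : ν V = 0
      · exact Or.inl h
      · refine Or.inr ?_
        by_contra hlt
        push_neg at hlt
        refine h (key V hVm hVW ?_)
        calc ν Sw + ν V ≤ ν Sw + δ := add_le_add_right hlt.le _
          _ = t' := hδadd
    obtain ⟨K, hK⟩ := ENNReal.exists_nat_mul_gt hδ0.ne' (measure_ne_top ν Set.univ)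
    obtain ⟨U', hU'W, hU'm, hU'pos, hU'atom⟩ :=
      exists_atom_aux ν δ K W hWmeas ((measure_mono (Set.subset_univ W)).trans hK.le) hWpos hdW
    have hδU' : δ ≤ ν U' := (hdW U' hU'W hU'm).resolve_left hU'pos.ne'
    have hU'η : (ν U').toReal ≤ η := hA U' hU'm hU'pos hU'atom
    have hdisj : Disjoint Sw U' := Set.subset_compl_iff_disjoint_left.1 hU'W
    have hval : ν (Sw ∪ U') = ν Sw + ν U' := measure_union hdisj hU'm
    have htr : (ν (Sw ∪ U')).toReal = (ν Sw).toReal + (ν U').toReal := by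
      rw [hval, ENNReal.toReal_add (measure_ne_top ν _) (measure_ne_top ν _)]
    have htδ : t = (ν Sw).toReal + δ.toReal := by
      have := congrArg ENNReal.toReal hδadd
      rw [ENNReal.toReal_add (measure_ne_top ν _) hδtop, ht', ENNReal.toReal_ofReal ht0] at this
      exact this.symm
    have hδle : δ.toReal ≤ (ν U').toReal :=
      ENNReal.toReal_mono (measure_ne_top ν _) hδU'
    have hSwle : (ν Sw).toReal ≤ t := by
      have := ENNReal.toReal_mono ht'top hSwt
      rwa [ht', ENNReal.toReal_ofReal ht0] at this
    refine ⟨Sw ∪ U', hSwmeas.union hU'm, ?_, ?_⟩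
    · rw [htr, htδ]
      exact add_le_add_right hδle _
    · rw [htr]
      linarith


open scoped ENNReal

lemma dependsOn_iInter {n : ℕ} {X : Fin n → Type*} {e : Finset (Fin n)} {ι : Sort*}
    {p : ι → Prop} {f : ι → Set (∀ i, X i)}
    (h : ∀ l, p l → CoordDependsOn e (f l)) :
    CoordDependsOn e (⋂ (l) (_ : p l), f l) := by
  intro x y hxy
  simp only [Set.mem_iInter]
  exact ⟨fun hx l hl => (h l hl x y hxy).1 (hx l hl), fun hx l hl => (h l hl x y hxy).2 (hx l hl)⟩

lemma dependsOn_inter {n : ℕ} {X : Fin n → Type*} {e : Finset (Fin n)}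
    {A B : Set (∀ i, X i)} (hA : CoordDependsOn e A) (hB : CoordDependsOn e B) :
    CoordDependsOn e (A ∩ B) := fun x y hxy => by
  rw [Set.mem_inter_iff, Set.mem_inter_iff, hA x y hxy, hB x y hxy]

lemma dependsOn_union {n : ℕ} {X : Fin n → Type*} {e : Finset (Fin n)}
    {A B : Set (∀ i, X i)} (hA : CoordDependsOn e A) (hB : CoordDependsOn e B) :
    CoordDependsOn e (A ∪ B) := fun x y hxy => by
  rw [Set.mem_union, Set.mem_union, hA x y hxy, hB x y hxy]

lemma pi_eval_preimage {n : ℕ} {X : Fin n → Type*} [∀ i, MeasurableSpace (X i)]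
    (μ : ∀ i, Measure (X i)) [∀ i, IsProbabilityMeasure (μ i)] (i : Fin n)
    {s : Set (X i)} (hs : MeasurableSet s) :
    Measure.pi μ ((fun x => x i) ⁻¹' s) = μ i s := by
  classical
  have heq : (fun x : ∀ j, X j => x i) ⁻¹' s =
      Set.pi Set.univ (Function.update (fun j => (Set.univ : Set (X j))) i s) := by
    ext x
    simp only [Set.mem_preimage, Set.mem_pi, Set.mem_univ, forall_true_left]
    constructor
    · intro hx j
      by_cases h : j = i
      · subst h; rw [Function.update_self]; exact hx
      · rw [Function.update_of_ne h]; trivial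
    · intro hx
      have := hx i
      rwa [Function.update_self] at this
  rw [heq, Measure.pi_pi]
  rw [Finset.prod_eq_single i]
  · rw [Function.update_self]
  · intro j _ hj
    rw [Function.update_of_ne hj, measure_univ]
  · intro h
    exact absurd (Finset.mem_univ i) h

/-- **Lemma 4.3.** In an `η`-nonatomic hypergraph system with `rη ≤ 1 - α`,
for every `A ∈ S_{∂e}` with `μ(A) < α` there is `B ∈ S_{∂e}` with `A ⊆ B` and
`α ≤ μ(B) < α + 2η`. -/
theorem stmt4 {n r : ℕ} (hnr : r ≤ n) (hr : 2 ≤ r)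
    {X : Fin n → Type*} [∀ i, MeasurableSpace (X i)]
    (μ : ∀ i, Measure (X i)) [∀ i, IsProbabilityMeasure (μ i)]
    (α η : ℝ) (hα0 : 0 < α) (hα1 : α < 1) (hη0 : 0 < η) (hη1 : η < 1)
    (hrη : r * η ≤ 1 - α)
    (hnonatomic : ∀ i, AtomsLE (μ i) η)
    (𝓗 : Finset (Finset (Fin n))) (e : Finset (Fin n)) (he : e ∈ 𝓗) (hecard : e.card = r)
    (A : Set (∀ i, X i)) (hA : SPartial e A) (hAα : ((Measure.pi μ) A).toReal < α) :
    ∃ B : Set (∀ i, X i), SPartial e B ∧ A ⊆ B ∧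
      α ≤ ((Measure.pi μ) B).toReal ∧ ((Measure.pi μ) B).toReal < α + 2 * η := by
  classical
  obtain ⟨F, hF, hAeq⟩ := hA
  -- enumeration of `e`
  set jm : Fin r → Fin n := fun l => ((e.orderIsoOfFin hecard) l : Fin n) with hjm
  have hjm_mem : ∀ l, jm l ∈ e := fun l => ((e.orderIsoOfFin hecard) l).2
  have hjm_inj : Function.Injective jm := fun a b h =>
    (e.orderIsoOfFin hecard).injective (Subtype.ext h)
  have hjm_surj : ∀ a ∈ e, ∃ l, jm l = a := fun a ha =>
    ⟨(e.orderIsoOfFin hecard).symm ⟨a, ha⟩, by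
      simp only [hjm, OrderIso.apply_symm_apply]⟩
  have hecard_pos : 0 < e.card := by omega
  have hbdry_iff : ∀ e' : Finset (Fin n), e' ∈ bdry e ↔ ∃ l : Fin r, e' = e.erase (jm l) := by
    intro e'
    constructor
    · intro h
      rw [bdry, Finset.mem_filter, Finset.mem_powerset] at h
      obtain ⟨hsub, hcard⟩ := h
      have hss : e' ⊂ e := Finset.ssubset_iff_subset_ne.2 ⟨hsub, fun h => by
        rw [h] at hcard; omega⟩
      obtain ⟨a, hae, hae'⟩ := Finset.exists_of_ssubset hss
      have h1 : e' = e.erase a := by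
        refine Finset.eq_of_subset_of_card_le (fun x hx => Finset.mem_erase.2
          ⟨fun hxa => hae' (hxa ▸ hx), hsub hx⟩) ?_
        rw [Finset.card_erase_of_mem hae]
        omega
      obtain ⟨l, hl⟩ := hjm_surj a hae
      exact ⟨l, by rw [h1, hl]⟩
    · rintro ⟨l, rfl⟩
      rw [bdry, Finset.mem_filter, Finset.mem_powerset]
      refine ⟨Finset.erase_subset _ _, ?_⟩
      rw [Finset.card_erase_of_mem (hjm_mem l)]
      omega
  have hbdry_mem : ∀ l : Fin r, e.erase (jm l) ∈ bdry e := fun l =>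
    (hbdry_iff _).2 ⟨l, rfl⟩
  have hFmeas : ∀ l : Fin r, MeasurableSet (F (e.erase (jm l))) := fun l =>
    (hF _ (hbdry_mem l)).1
  -- the partial intersections
  set R : ℕ → Set (∀ i, X i) :=
    fun m => ⋂ (l : Fin r) (_ : m ≤ (l : ℕ)), F (e.erase (jm l)) with hR
  have hRmeas : ∀ m, MeasurableSet (R m) := fun m =>
    MeasurableSet.iInter fun l => MeasurableSet.iInter fun _ => hFmeas l
  have hAsub : ∀ l : Fin r, A ⊆ F (e.erase (jm l)) := by
    intro l
    rw [hAeq]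
    exact Set.biInter_subset_of_mem (hbdry_mem l)
  have hAR : ∀ m, A ⊆ R m := by
    intro m x hx
    simp only [hR, Set.mem_iInter]
    intro l _
    exact hAsub l hx
  have hR0 : R 0 = A := by
    refine Set.Subset.antisymm ?_ (hAR 0)
    rw [hAeq]
    intro x hx
    simp only [Set.mem_iInter]
    intro e' he'
    obtain ⟨l, rfl⟩ := (hbdry_iff e').1 he'
    simp only [hR, Set.mem_iInter] at hx
    exact hx l (Nat.zero_le _)
  have hRr : R r = Set.univ := by
    rw [hR]
    refine Set.eq_univ_of_forall fun x => ?_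
    simp only [Set.mem_iInter]
    intro l hl
    exact absurd hl (not_le.2 l.isLt)
  have hRmono : ∀ m m' : ℕ, m ≤ m' → R m ⊆ R m' := by
    intro m m' h x hx
    simp only [hR, Set.mem_iInter] at hx ⊢
    intro l hl
    exact hx l (h.trans hl)
  set M : ℕ → ℝ := fun m => ((Measure.pi μ) (R m)).toReal with hM
  have hMfin : ∀ s : Set (∀ i, X i), (Measure.pi μ) s ≠ ⊤ := fun s => measure_ne_top _ s
  have hMmono : ∀ m m' : ℕ, m ≤ m' → M m ≤ M m' := fun m m' h =>
    ENNReal.toReal_mono (hMfin _) (measure_mono (hRmono m m' h))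
  have hM0 : M 0 < α := by rw [hM]; simpa only [hR0] using hAα
  have hMr : α ≤ M r := by
    rw [hM]
    simp only [hRr, measure_univ, ENNReal.toReal_one]
    linarith
  -- find the crossing point
  have hex : ∃ m, α ≤ M m := ⟨r, hMr⟩
  set k1 := Nat.find hex with hk1
  have hk1r : k1 ≤ r := Nat.find_le hMr
  have hk1pos : k1 ≠ 0 := fun h => absurd (Nat.find_spec hex) (by rw [← hk1, h] at *; exact hM0.not_ge)
  obtain ⟨k, hk⟩ : ∃ k, k1 = k + 1 := ⟨k1 - 1, by omega⟩
  have hMk1 : α ≤ M (k + 1) := hk ▸ Nat.find_spec hex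
  have hMk : M k < α := by
    have := Nat.find_min hex (m := k) (by omega)
    linarith [not_le.1 this]
  have hkr : k < r := by
    by_contra h
    push_neg at h
    exact absurd (hMmono r k h) (by linarith [hMr])
  set lstar : Fin r := ⟨k, hkr⟩ with hlstar
  have hlval : (lstar : ℕ) = k := rfl
  set e₀ : Finset (Fin n) := e.erase (jm lstar) with he₀
  have hsplit : R k = R (k + 1) ∩ F e₀ := by
    ext x
    simp only [hR, Set.mem_iInter, Set.mem_inter_iff]
    constructor
    · intro hx
      exact ⟨fun l hl => hx l (by omega), hx lstar (by omega)⟩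
    · rintro ⟨hx1, hx2⟩ l hl
      rcases Nat.lt_or_ge (l : ℕ) (k+1) with h | h
      · have : l = lstar := Fin.ext (by omega)
        rw [this]; exact hx2
      · exact hx1 l h
  -- the common SPartial construction
  have main : ∀ G : Set (∀ i, X i), CubeSet e₀ G → SPartial e (R (k + 1) ∩ G) := by
    intro G hG
    refine ⟨fun e' => (⋂ (l : Fin r) (_ : k + 1 ≤ (l : ℕ) ∧ e' = e.erase (jm l)), F e') ∩
      (if e' = e₀ then G else Set.univ), ?_, ?_⟩
    · intro e' he'
      constructor
      · refine MeasurableSet.inter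
          (MeasurableSet.iInter fun l => MeasurableSet.iInter fun hl => (hF e' he').1) ?_
        split_ifs
        exacts [hG.1, MeasurableSet.univ]
      · refine dependsOn_inter (dependsOn_iInter fun l hl => (hF e' he').2) ?_
        split_ifs with h
        · rw [h]; exact hG.2
        · exact fun x y _ => Iff.rfl
    · ext x
      simp only [Set.mem_inter_iff, Set.mem_iInter]
      constructor
      · rintro ⟨hx1, hx2⟩ e' he'
        refine ⟨?_, ?_⟩
        · rintro l ⟨hl, rfl⟩
          simp only [hR, Set.mem_iInter] at hx1
          exact hx1 l hl
        · split_ifs with h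
          · exact hx2
          · trivial
      · intro hx
        refine ⟨?_, ?_⟩
        · simp only [hR, Set.mem_iInter]
          intro l hl
          have := hx _ (hbdry_mem l)
          exact this.1 l ⟨hl, rfl⟩
        · have := hx e₀ (he₀ ▸ hbdry_mem lstar)
          simp only [Set.mem_inter_iff, if_pos rfl] at this
          exact this.2
  by_cases hcaseA : M (k + 1) < α + 2 * η
  · refine ⟨R (k + 1), ?_, hAR (k + 1), hMk1, hcaseA⟩
    have := main Set.univ ⟨MeasurableSet.univ, fun x y _ => Iff.rfl⟩
    rwa [Set.inter_univ] at this
  · push_neg at hcaseA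
    obtain ⟨i, hie, hine⟩ := Finset.exists_mem_ne (by omega : 1 < e.card) (jm lstar)
    set D : Set (∀ j, X j) := R (k + 1) \ F e₀ with hD
    have hFe₀meas : MeasurableSet (F e₀) := he₀ ▸ hFmeas lstar
    have hFe₀dep : CoordDependsOn e₀ (F e₀) := (hF e₀ (he₀ ▸ hbdry_mem lstar)).2
    have hDmeas : MeasurableSet D := (hRmeas (k + 1)).diff hFe₀meas
    set ν : Measure (X i) := Measure.map (fun x => x i) ((Measure.pi μ).restrict D) with hν
    have hν_apply : ∀ s : Set (X i), MeasurableSet s →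
        ν s = Measure.pi μ (D ∩ (fun x : ∀ j, X j => x i) ⁻¹' s) := by
      intro s hs
      rw [hν, Measure.map_apply (measurable_pi_apply i) hs,
        Measure.restrict_apply ((measurable_pi_apply i) hs), Set.inter_comm]
    haveI hνfinite : IsFiniteMeasure ν := by
      constructor
      rw [hν_apply _ MeasurableSet.univ]
      exact lt_of_le_of_lt (measure_mono (Set.subset_univ _)) (measure_lt_top _ _)
    have hνle : ν ≤ μ i := by
      refine Measure.le_iff.2 fun s hs => ?_
      rw [hν_apply s hs]
      calc Measure.pi μ (D ∩ (fun x : ∀ j, X j => x i) ⁻¹' s)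
          ≤ Measure.pi μ ((fun x : ∀ j, X j => x i) ⁻¹' s) :=
            measure_mono Set.inter_subset_right
        _ = μ i s := pi_eval_preimage μ i hs
    have hνatoms : AtomsLE ν η := atomsLE_of_le hνle (hnonatomic i)
    have hRsub : R k ⊆ R (k + 1) := hRmono k (k + 1) (by omega)
    have hDeq : D = R (k + 1) \ R k := by
      rw [hD, hsplit]
      ext x
      simp only [Set.mem_diff, Set.mem_inter_iff]
      tauto
    have hνuniv : (ν Set.univ).toReal = M (k + 1) - M k := by
      rw [hν_apply _ MeasurableSet.univ]
      simp only [Set.preimage_univ, Set.inter_univ]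
      rw [hDeq, measure_diff hRsub (hRmeas k).nullMeasurableSet (hMfin _),
        ENNReal.toReal_sub_of_le (measure_mono hRsub) (hMfin _)]
    set t : ℝ := α - M k with htdef
    have ht0 : 0 ≤ t := by rw [htdef]; linarith
    have ht : ENNReal.ofReal t ≤ ν Set.univ := by
      refine ENNReal.ofReal_le_of_le_toReal ?_
      rw [hνuniv, htdef]
      linarith
    obtain ⟨S, hSmeas, hSt1, hSt2⟩ := exists_measure_between ν hη0 hνatoms ht0 ht
    set cyl : Set (∀ j, X j) := (fun x : ∀ j, X j => x i) ⁻¹' S with hcyl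
    have hcylmeas : MeasurableSet cyl := (measurable_pi_apply i) hSmeas
    have hcyldep : CoordDependsOn e₀ cyl := by
      intro x y hxy
      have hi : i ∈ e₀ := by rw [he₀]; exact Finset.mem_erase.2 ⟨hine, hie⟩
      rw [hcyl, Set.mem_preimage, Set.mem_preimage, hxy i hi]
    have hG : CubeSet e₀ (F e₀ ∪ cyl) :=
      ⟨hFe₀meas.union hcylmeas, dependsOn_union hFe₀dep hcyldep⟩
    refine ⟨R (k + 1) ∩ (F e₀ ∪ cyl), main _ hG, ?_, ?_, ?_⟩
    · intro x hx
      have := hAR k hx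
      rw [hsplit] at this
      exact ⟨this.1, Or.inl this.2⟩
    all_goals {
      have hBsplit : R (k + 1) ∩ (F e₀ ∪ cyl) = R k ∪ (D ∩ cyl) := by
        rw [hsplit, hD]
        ext x
        simp only [Set.mem_inter_iff, Set.mem_union, Set.mem_diff]
        tauto
      have hdisj : Disjoint (R k) (D ∩ cyl) := by
        rw [Set.disjoint_left]
        intro x hx hx2
        rw [hsplit] at hx
        exact hx2.1.2 hx.2
      have hμB : Measure.pi μ (R (k + 1) ∩ (F e₀ ∪ cyl)) = Measure.pi μ (R k) + ν S := by
        rw [hBsplit, measure_union hdisj (hDmeas.inter hcylmeas), hν_apply S hSmeas]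
      have htr : ((Measure.pi μ) (R (k + 1) ∩ (F e₀ ∪ cyl))).toReal = M k + (ν S).toReal := by
        rw [hμB, ENNReal.toReal_add (hMfin _) (measure_ne_top ν S)]
      rw [htr]
      rw [htdef] at hSt1 hSt2
      first
        | linarith
        | linarith }
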